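/- arXiv:2011.04709 — 2 statements merged into one kernel-verified Lean document; each statement's English description precedes it below -/
import Mathlib

section
/- Let X be a finite nonempty set, p : X → ℝ a strictly positive base measure, α > 0, and for θ ∈ ℝ let r_θ : X → ℝ be such that θ ↦ r_θ(x) is differentiable for each x. Define the tilted distribution ρ_θ(x) = p(x)·exp(r_θ(x)/α) / Z(θ) with Z(θ) = Σ_{x'} p(x')·exp(r_{θ}(x')/α). Then for any fixed function g : X → ℝ, d/dθ Σ_x ρ_θ(x)·g(x) = (1/α)·Cov_{ρ_θ}(g, ∂r_θ/∂θ), where Cov_{ρ_θ}(g, h) = E_{ρ_θ}[g·h] - E_{ρ_θ}[g]·E_{ρ_θ}[h]. -/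
open Finset in
/-- Covariance identity for exponentially tilted distributions (finite-state version of the
f-IRL gradient theorem): with `ρ_θ(x) = p(x) exp(r_θ(x)/α) / Z(θ)`, for any fixed `g`,
`d/dθ E_{ρ_θ}[g] = (1/α)·Cov_{ρ_θ}(g, ∂r_θ/∂θ)`. -/
theorem deriv_expectation_tilted
    {X : Type*} [Fintype X] [Nonempty X]
    (p : X → ℝ) (hp : ∀ x, 0 < p x) (α : ℝ) (hα : 0 < α)
    (r r' : ℝ → X → ℝ)
    (hr : ∀ x θ, HasDerivAt (fun θ => r θ x) (r' θ x) θ)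
    (Z : ℝ → ℝ) (hZ : ∀ θ, Z θ = ∑ x, p x * Real.exp (r θ x / α))
    (ρ : ℝ → X → ℝ) (hρ : ∀ θ x, ρ θ x = p x * Real.exp (r θ x / α) / Z θ)
    (g : X → ℝ) (θ₀ : ℝ) :
    HasDerivAt (fun θ => ∑ x, ρ θ x * g x)
      ((1 / α) * ((∑ x, ρ θ₀ x * (g x * r' θ₀ x))
        - (∑ x, ρ θ₀ x * g x) * (∑ x, ρ θ₀ x * r' θ₀ x))) θ₀ := by
  have hZpos : ∀ θ, 0 < Z θ := by
    intro θ
    rw [hZ]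
    exact Finset.sum_pos (fun x _ => mul_pos (hp x) (Real.exp_pos _))
      Finset.univ_nonempty
  set e : ℝ → X → ℝ := fun θ x => p x * Real.exp (r θ x / α) with he
  have hterm : ∀ x, HasDerivAt (fun θ => e θ x)
      (e θ₀ x * (r' θ₀ x / α)) θ₀ := by
    intro x
    have h1 : HasDerivAt (fun θ => r θ x / α) (r' θ₀ x / α) θ₀ :=
      (hr x θ₀).div_const α
    have h2 := (h1.exp).const_mul (p x)
    simpa [he, mul_comm, mul_assoc, mul_left_comm] using h2
  -- numerator for g=g and numerator for Z
  have hnum : HasDerivAt (fun θ => ∑ x, e θ x * g x)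
      (∑ x, e θ₀ x * (r' θ₀ x / α) * g x) θ₀ :=
    HasDerivAt.fun_sum (fun x _ => (hterm x).mul_const (g x))
  have hden : HasDerivAt Z (∑ x, e θ₀ x * (r' θ₀ x / α)) θ₀ := by
    have : HasDerivAt (fun θ => ∑ x, e θ x)
        (∑ x, e θ₀ x * (r' θ₀ x / α)) θ₀ :=
      HasDerivAt.fun_sum (fun x _ => hterm x)
    have hfun : Z = fun θ => ∑ x, e θ x := funext fun θ => hZ θ
    rw [hfun]
    exact this
  have hdiv := hnum.fun_div hden (ne_of_gt (hZpos θ₀))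
  have hfun2 : (fun θ => ∑ x, ρ θ x * g x)
      = fun θ => (∑ x, e θ x * g x) / Z θ := by
    funext θ
    rw [Finset.sum_div]
    exact Finset.sum_congr rfl fun x _ => by rw [hρ, div_mul_eq_mul_div]
  rw [hfun2]
  refine hdiv.congr_deriv (Eq.symm ?_)
  have hZ0 := (hZpos θ₀).ne'
  have hα0 := hα.ne'
  have h1 : ∀ (f : X → ℝ), (∑ x, ρ θ₀ x * f x) = (∑ x, e θ₀ x * f x) / Z θ₀ := by
    intro f
    rw [Finset.sum_div]
    exact Finset.sum_congr rfl fun x _ => by rw [hρ]; ring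
  have h2 : (∑ x, e θ₀ x * (r' θ₀ x / α) * g x)
      = (∑ x, e θ₀ x * (g x * r' θ₀ x)) / α := by
    rw [Finset.sum_div]
    exact Finset.sum_congr rfl fun x _ => by ring
  have h3 : (∑ x, e θ₀ x * (r' θ₀ x / α))
      = (∑ x, e θ₀ x * r' θ₀ x) / α := by
    rw [Finset.sum_div]
    exact Finset.sum_congr rfl fun x _ => by ring
  rw [h1, h1, h1, h2, h3]
  field_simp
end

section
/- Let S and A be finite sets, γ ∈ [0,1), r : S × A × S → ℝ a reward function, and Φ : S → ℝ any function. Define the shaped reward r̂(s,a,s') = r(s,a,s') + γ·Φ(s') - Φ(s). For any policy π and any transition kernel P, the discounted action-value functions satisfy Q̂^π(s,a) = Q^π(s,a) - Φ(s) for all (s,a), where Q^π and Q̂^π are the Q-functions under r and r̂ respectively. Consequently, for every state s, argmax_a Q̂^π(s,a) = argmax_a Q^π(s,a). -/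
open Finset in
/-- Potential-based reward shaping: if `Q` and `Qhat` are the discounted action-value
functions of a policy `π` under rewards `r` and `r̂(s,a,s') = r(s,a,s') + γΦ(s') - Φ(s)`
respectively (characterized by their Bellman equations under transition kernel `P`),
then `Qhat(s,a) = Q(s,a) - Φ(s)`, and greedy action selection is unchanged. -/
theorem potential_shaping
    {S A : Type*} [Fintype S] [Fintype A] [Nonempty S] [Nonempty A]
    (γ : ℝ) (hγ0 : 0 ≤ γ) (hγ1 : γ < 1)
    (r : S → A → S → ℝ) (Φ : S → ℝ)
    (P : S → A → S → ℝ) (hP0 : ∀ s a s', 0 ≤ P s a s') (hP1 : ∀ s a, ∑ s', P s a s' = 1)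
    (π : S → A → ℝ) (hπ0 : ∀ s a, 0 ≤ π s a) (hπ1 : ∀ s, ∑ a, π s a = 1)
    (Q Qhat : S → A → ℝ)
    (hQ : ∀ s a, Q s a = ∑ s', P s a s' * (r s a s' + γ * ∑ a', π s' a' * Q s' a'))
    (hQhat : ∀ s a, Qhat s a = ∑ s', P s a s' *
      ((r s a s' + γ * Φ s' - Φ s) + γ * ∑ a', π s' a' * Qhat s' a')) :
    (∀ s a, Qhat s a = Q s a - Φ s) ∧
    (∀ s : S, {a : A | ∀ a', Qhat s a' ≤ Qhat s a} = {a : A | ∀ a', Q s a' ≤ Q s a}) := by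
  set D : S → A → ℝ := fun s a => Qhat s a - (Q s a - Φ s) with hD
  have hinner : ∀ s' : S, ∑ a', π s' a' * D s' a'
      = (∑ a', π s' a' * (Qhat s' a' - Q s' a')) + Φ s' := by
    intro s'
    have : ∀ a' ∈ Finset.univ, π s' a' * D s' a'
        = π s' a' * (Qhat s' a' - Q s' a') + π s' a' * Φ s' := by
      intro a' _; simp only [hD]; ring
    rw [Finset.sum_congr rfl this, Finset.sum_add_distrib, ← Finset.sum_mul, hπ1]
    ring
  have key : ∀ s a, D s a = γ * ∑ s', P s a s' * ∑ a', π s' a' * D s' a' := by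
    intro s a
    have hsub : ∑ a' : A, π s a' * Qhat s a' - ∑ a' : A, π s a' * Q s a'
        = ∑ a' : A, π s a' * (Qhat s a' - Q s a') := by
      rw [← Finset.sum_sub_distrib]; exact Finset.sum_congr rfl fun a' _ => by ring
    calc D s a = (∑ s', P s a s' *
          ((r s a s' + γ * Φ s' - Φ s) + γ * ∑ a', π s' a' * Qhat s' a'))
        - (∑ s', P s a s' * (r s a s' + γ * ∑ a', π s' a' * Q s' a')) + Φ s := by
          simp only [hD, hQhat s a, hQ s a]; ring
      _ = (∑ s', P s a s' * (γ * ((∑ a', π s' a' * (Qhat s' a' - Q s' a')) + Φ s') - Φ s))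
          + Φ s := by
          rw [← Finset.sum_sub_distrib]
          congr 1
          refine Finset.sum_congr rfl fun s' _ => ?_
          have h2 : ∑ a' : A, π s' a' * Qhat s' a' - ∑ a' : A, π s' a' * Q s' a'
              = ∑ a' : A, π s' a' * (Qhat s' a' - Q s' a') := by
            rw [← Finset.sum_sub_distrib]; exact Finset.sum_congr rfl fun a' _ => by ring
          rw [← h2]; ring
      _ = (∑ s', P s a s' * (γ * ((∑ a', π s' a' * (Qhat s' a' - Q s' a')) + Φ s')))
          - (∑ s', P s a s') * Φ s + Φ s := by
          rw [Finset.sum_mul, ← Finset.sum_sub_distrib]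
          congr 1
          exact (Finset.sum_congr rfl fun s' _ => by ring)
      _ = γ * ∑ s', P s a s' * ∑ a', π s' a' * D s' a' := by
          rw [hP1, Finset.mul_sum]
          have : ∀ s' ∈ Finset.univ, γ * (P s a s' * ∑ a', π s' a' * D s' a')
              = P s a s' * (γ * ((∑ a', π s' a' * (Qhat s' a' - Q s' a')) + Φ s')) := by
            intro s' _; rw [hinner s']; ring
          rw [Finset.sum_congr rfl this]; ring
  -- sup norm
  set M : ℝ := Finset.univ.sup' (Finset.univ_nonempty) (fun p : S × A => |D p.1 p.2|) with hM
  have hMle : ∀ s a, |D s a| ≤ M := fun s a =>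
    Finset.le_sup' (f := fun p : S × A => |D p.1 p.2|) (Finset.mem_univ (s, a))
  have hM0 : 0 ≤ M := le_trans (abs_nonneg _) (hMle Classical.ofNonempty Classical.ofNonempty)
  have hbound : ∀ s a, |D s a| ≤ γ * M := by
    intro s a
    rw [key s a, abs_mul, abs_of_nonneg hγ0]
    refine mul_le_mul_of_nonneg_left ?_ hγ0
    calc |∑ s', P s a s' * ∑ a', π s' a' * D s' a'|
        ≤ ∑ s', |P s a s' * ∑ a', π s' a' * D s' a'| := Finset.abs_sum_le_sum_abs _ _
      _ ≤ ∑ s', P s a s' * M := by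
          refine Finset.sum_le_sum fun s' _ => ?_
          rw [abs_mul, abs_of_nonneg (hP0 s a s')]
          refine mul_le_mul_of_nonneg_left ?_ (hP0 s a s')
          calc |∑ a', π s' a' * D s' a'| ≤ ∑ a', |π s' a' * D s' a'| :=
                Finset.abs_sum_le_sum_abs _ _
            _ ≤ ∑ a', π s' a' * M := by
                refine Finset.sum_le_sum fun a' _ => ?_
                rw [abs_mul, abs_of_nonneg (hπ0 s' a')]
                exact mul_le_mul_of_nonneg_left (hMle s' a') (hπ0 s' a')
            _ = M := by rw [← Finset.sum_mul, hπ1, one_mul]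
      _ = M := by rw [← Finset.sum_mul, hP1, one_mul]
  have hMγ : M ≤ γ * M := by
    refine Finset.sup'_le _ _ fun p _ => hbound p.1 p.2
  have hMzero : M = 0 := by nlinarith
  have hDzero : ∀ s a, D s a = 0 := by
    intro s a
    have := hMle s a
    rw [hMzero] at this
    exact abs_eq_zero.mp (le_antisymm this (abs_nonneg _))
  have hmain : ∀ s a, Qhat s a = Q s a - Φ s := by
    intro s a
    have := hDzero s a
    simp only [hD] at this
    linarith
  refine ⟨hmain, fun s => ?_⟩
  ext a
  simp only [Set.mem_setOf_eq, hmain]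
  constructor <;> intro h a' <;> have := h a' <;> linarith
end
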